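/- arXiv:2406.03334 — 3 statements merged into one kernel-verified Lean document; each statement's English description precedes it below -/
import Mathlib

section
/- If γ : [0,1] → R^D is a continuously differentiable path with f(γ(t), x) = f(γ(0), x) for all t ∈ [0,1] and all x in the training set X, then the pullback length of γ is zero: ∫₀¹ √(γ'(t)^T GGN_{γ(t)} γ'(t)) dt = 0, where GGN_w = J_w^T H_w J_w with H_w positive semi-definite. -/
open Matrix

/-- Along a C¹ path on which the (stacked) network outputs `F` over the training
set are constant, the pullback (GGN pseudo-metric) length of the path is zero. -/
theorem pullback_length_zero_of_constant_predictions {D M : ℕ}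
    (F : (Fin D → ℝ) → Fin M → ℝ)
    (Jlin : (Fin D → ℝ) → (Fin D → ℝ) →L[ℝ] (Fin M → ℝ))
    (hF : ∀ w, HasFDerivAt F (Jlin w) w)
    (H : (Fin D → ℝ) → Matrix (Fin M) (Fin M) ℝ)
    (hH : ∀ w, (H w).PosSemidef)
    (γ γ' : ℝ → Fin D → ℝ)
    (hγ : ∀ t, HasDerivAt γ (γ' t) t) (hγ' : Continuous γ')
    (hconst : ∀ t ∈ Set.Icc (0:ℝ) 1, F (γ t) = F (γ 0)) :
    ∫ t in (0:ℝ)..1,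
      Real.sqrt (Jlin (γ t) (γ' t) ⬝ᵥ (H (γ t)).mulVec (Jlin (γ t) (γ' t))) = 0 := by
  have hzero : ∀ t ∈ Set.Ioo (0:ℝ) 1, Jlin (γ t) (γ' t) = 0 := by
    intro t ht
    -- F ∘ γ has derivative Jlin (γ t) (γ' t) at t
    have hd : HasDerivAt (fun s => F (γ s)) (Jlin (γ t) (γ' t)) t :=
      (hF (γ t)).comp_hasDerivAt t (hγ t)
    -- F ∘ γ is locally constant near t
    have heq : (fun s => F (γ s)) =ᶠ[nhds t] (fun _ => F (γ 0)) := by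
      filter_upwards [Ioo_mem_nhds ht.1 ht.2] with s hs
      exact hconst s (Set.Ioo_subset_Icc_self hs)
    have hd0 : HasDerivAt (fun s => F (γ s)) 0 t :=
      (hasDerivAt_const t (F (γ 0))).congr_of_eventuallyEq heq
    exact hd.unique hd0
  have : ∀ᵐ t ∂MeasureTheory.volume, t ∈ Set.uIoc (0:ℝ) 1 →
      Real.sqrt (Jlin (γ t) (γ' t) ⬝ᵥ (H (γ t)).mulVec (Jlin (γ t) (γ' t))) = 0 := by
    have h1 : ∀ᵐ t ∂MeasureTheory.volume, t ≠ (1:ℝ) := by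
      refine MeasureTheory.ae_iff.2 ?_
      simpa using Real.volume_singleton (a := 1)
    filter_upwards [h1] with t ht1 ht
    rw [Set.uIoc_of_le (by norm_num : (0:ℝ) ≤ 1)] at ht
    have htmem : t ∈ Set.Ioo (0:ℝ) 1 := ⟨ht.1, lt_of_le_of_ne ht.2 ht1⟩
    rw [hzero t htmem]
    simp
  rw [intervalIntegral.integral_congr_ae this]
  simp
end

section
/- Let f be such that w ↦ f(w, x) is L-Lipschitz for every x ∈ X. If w₀ ∼ w₁ in the quotient metric sense, i.e., the quotient distance d_P([w₀],[w₁]) = 0, then f(w₀, x) = f(w₁, x) for all x ∈ X. -/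
def Reparam {D I O : ℕ}
    (f : EuclideanSpace ℝ (Fin D) → (Fin I → ℝ) → EuclideanSpace ℝ (Fin O))
    (X : Set (Fin I → ℝ)) (w w' : EuclideanSpace ℝ (Fin D)) : Prop :=
  ∃ γ : ℝ → EuclideanSpace ℝ (Fin D),
    ContinuousOn γ (Set.Icc 0 1) ∧
    (∃ s : Finset ℝ, ∀ t ∈ Set.Icc (0:ℝ) 1, t ∉ s → DifferentiableAt ℝ γ t) ∧
    γ 0 = w ∧ γ 1 = w' ∧
    ∀ t ∈ Set.Icc (0:ℝ) 1, ∀ x ∈ X, f (γ t) x = f w x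

lemma reparam_apply_eq {D I O : ℕ}
    {f : EuclideanSpace ℝ (Fin D) → (Fin I → ℝ) → EuclideanSpace ℝ (Fin O)}
    {X : Set (Fin I → ℝ)} {w w' : EuclideanSpace ℝ (Fin D)}
    (h : Reparam f X w w') {x : Fin I → ℝ} (hx : x ∈ X) : f w' x = f w x := by
  obtain ⟨γ, -, -, h0, h1, hc⟩ := h
  rw [← h1]
  exact hc 1 ⟨zero_le_one, le_refl 1⟩ x hx

open Fin.NatCast in
/-- If `f` is `L`-Lipschitz in the parameters on the training inputs and the
quotient (chain) distance between the classes of `w₀` and `w₁` vanishes, then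
`w₀` and `w₁` parametrize the same function on `X`. -/
theorem quotient_distance_zero_implies_same_function {D I O : ℕ}
    (f : EuclideanSpace ℝ (Fin D) → (Fin I → ℝ) → EuclideanSpace ℝ (Fin O))
    (X : Set (Fin I → ℝ)) (L : ℝ)
    (hLip : ∀ p q x, x ∈ X → ‖f p x - f q x‖ ≤ L * ‖p - q‖)
    (w₀ w₁ : EuclideanSpace ℝ (Fin D))
    (hdist : ∀ ε > 0, ∃ (n : ℕ) (p q : Fin (n + 1) → EuclideanSpace ℝ (Fin D)),
      Reparam f X w₀ (p 0) ∧
      (∀ i : Fin n, Reparam f X (q i.castSucc) (p i.succ)) ∧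
      Reparam f X (q (Fin.last n)) w₁ ∧
      ∑ i, ‖p i - q i‖ < ε) :
    ∀ x ∈ X, f w₀ x = f w₁ x := by
  intro x hx
  set L' : ℝ := max L 0 with hL'def
  have hL'0 : 0 ≤ L' := le_max_right _ _
  have hLip' : ∀ p q, ‖f p x - f q x‖ ≤ L' * ‖p - q‖ := by
    intro p q
    calc ‖f p x - f q x‖ ≤ L * ‖p - q‖ := hLip p q x hx
    _ ≤ L' * ‖p - q‖ := by
        apply mul_le_mul_of_nonneg_right (le_max_left _ _) (norm_nonneg _)
  -- main bound
  have main : ∀ ε > 0, ‖f w₀ x - f w₁ x‖ ≤ L' * ε := by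
    intro ε hε
    obtain ⟨n, p, q, h0, hmid, hlast, hsum⟩ := hdist ε hε
    have castlem : ∀ (m : ℕ) (hm : m < n + 1), ((m : Fin (n+1))) = ⟨m, hm⟩ := by
      intro m hm
      apply Fin.ext
      simp [Fin.val_natCast, Nat.mod_eq_of_lt hm]
    have key : ∀ k : ℕ, k ≤ n →
        ‖f w₀ x - f (q k) x‖ ≤ L' * ∑ i ∈ Finset.range (k+1), ‖p i - q i‖ := by
      intro k
      induction k with
      | zero =>
        intro _
        have h00 : f (p 0) x = f w₀ x := reparam_apply_eq h0 hx
        rw [Finset.sum_range_one]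
        rw [← h00]
        simpa using hLip' (p 0) (q 0)
      | succ m ih =>
        intro hm
        have hmn : m < n := by omega
        have hbridge : f (q (m : Fin (n+1))) x = f (p ((m+1 : ℕ) : Fin (n+1))) x := by
          have := reparam_apply_eq (hmid ⟨m, hmn⟩) hx
          have e1 : (⟨m, hmn⟩ : Fin n).castSucc = ((m : ℕ) : Fin (n+1)) := by
            rw [castlem m (by omega)]; rfl
          have e2 : (⟨m, hmn⟩ : Fin n).succ = ((m+1 : ℕ) : Fin (n+1)) := by
            rw [castlem (m+1) (by omega)]; rfl
          rw [e1, e2] at this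
          exact this.symm
        have tri : ‖f w₀ x - f (q ((m+1:ℕ) : Fin (n+1))) x‖ ≤
            ‖f w₀ x - f (q (m : Fin (n+1))) x‖ +
            ‖f (q (m : Fin (n+1))) x - f (q ((m+1:ℕ) : Fin (n+1))) x‖ :=
          norm_sub_le_norm_sub_add_norm_sub _ _ _
        have step : ‖f (q (m : Fin (n+1))) x - f (q ((m+1:ℕ) : Fin (n+1))) x‖ ≤
            L' * ‖p ((m+1:ℕ) : Fin (n+1)) - q ((m+1:ℕ) : Fin (n+1))‖ := by
          rw [hbridge]
          exact hLip' _ _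
        have ihm := ih (by omega)
        rw [Finset.sum_range_succ, mul_add]
        push_cast
        push_cast at tri step ihm
        linarith
    have hn := key n (le_refl n)
    have hlast' : f w₁ x = f (q (Fin.last n)) x := reparam_apply_eq hlast hx
    have hcast : ((n : ℕ) : Fin (n+1)) = Fin.last n := by
      rw [castlem n (by omega)]; rfl
    rw [hcast, ← hlast'] at hn
    have hsum' : ∑ i ∈ Finset.range (n+1), ‖p (i : Fin (n+1)) - q (i : Fin (n+1))‖
        = ∑ i : Fin (n+1), ‖p i - q i‖ := by
      rw [← Fin.sum_univ_eq_sum_range (fun i => ‖p (i : Fin (n+1)) - q (i : Fin (n+1))‖) (n+1)]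
      simp [Fin.cast_val_eq_self]
    rw [hsum'] at hn
    calc ‖f w₀ x - f w₁ x‖ ≤ L' * ∑ i : Fin (n+1), ‖p i - q i‖ := hn
    _ ≤ L' * ε := mul_le_mul_of_nonneg_left (le_of_lt hsum) hL'0
  have hnorm : ‖f w₀ x - f w₁ x‖ ≤ 0 := by
    by_contra h
    push_neg at h
    have hε : ‖f w₀ x - f w₁ x‖ / (L' + 1) > 0 := by positivity
    have := main _ hε
    have hpos : (0:ℝ) < L' + 1 := by linarith
    have h2 : L' * (‖f w₀ x - f w₁ x‖ / (L' + 1)) = (L' / (L' + 1)) * ‖f w₀ x - f w₁ x‖ := by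
      ring
    have h3 : L' / (L' + 1) < 1 := (div_lt_one hpos).mpr (by linarith)
    rw [h2] at this
    nlinarith
  have := norm_nonneg (f w₀ x - f w₁ x)
  have : ‖f w₀ x - f w₁ x‖ = 0 := le_antisymm hnorm this
  exact sub_eq_zero.mp (norm_eq_zero.mp this)
end

section
/- For a quadratic form metric that is uniformly bounded (‖v‖_{G_w} ≤ L‖v‖ for all v, w), if the quotient distance d_P([w₀],[w₁]) < δ then the geodesic distance satisfies d_G(w₀, w₁) < 3Lδ, assuming that any two points in the same equivalence class are connected by paths of arbitrarily small pullback length. -/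
open Matrix MeasureTheory Set intervalIntegral

noncomputable section
noncomputable section

/-- two-piece glue -/
def pc {α : Type*} (a : ℝ) (f g : ℝ → α) : ℝ → α := fun t => if t ≤ a then f t else g t

variable {E : Type*} [NormedAddCommGroup E] [NormedSpace ℝ E]

theorem pc_hasDerivAt {a : ℝ} {f g f' g' : ℝ → E}
    (hf : ∀ t, HasDerivAt f (f' t) t) (hg : ∀ t, HasDerivAt g (g' t) t)
    (hv : f a = g a) (hd : f' a = g' a) (t : ℝ) :
    HasDerivAt (pc a f g) (pc a f' g' t) t := by
  rcases lt_trichotomy t a with h | h | h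
  · have he : pc a f g =ᶠ[nhds t] f := by
      filter_upwards [Iio_mem_nhds h] with x hx
      simp only [pc, if_pos (le_of_lt (mem_Iio.1 hx))]
    have hval : pc a f' g' t = f' t := by simp only [pc, if_pos h.le]
    rw [hval]
    exact (hf t).congr_of_eventuallyEq he
  · subst h
    have h1 : HasDerivWithinAt (pc t f g) (f' t) (Iic t) t := by
      refine ((hf t).hasDerivWithinAt).congr (fun y hy => ?_) ?_
      · simp only [pc, if_pos (mem_Iic.1 hy)]
      · simp only [pc, if_pos le_rfl]
    have h2 : HasDerivWithinAt (pc t f g) (f' t) (Ici t) t := by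
      rw [hd]
      refine ((hg t).hasDerivWithinAt).congr (fun y hy => ?_) ?_
      · rcases eq_or_lt_of_le (mem_Ici.1 hy) with h | h
        · simp only [pc, ← h, if_pos le_rfl, hv]
        · simp only [pc, if_neg (not_le.2 h)]
      · simp only [pc, if_pos le_rfl, hv]
    have h3 := h1.union h2
    rw [Iic_union_Ici, hasDerivWithinAt_univ] at h3
    have hval : pc t f' g' t = f' t := by simp only [pc, if_pos le_rfl]
    rwa [hval]
  · have he : pc a f g =ᶠ[nhds t] g := by
      filter_upwards [Ioi_mem_nhds h] with x hx
      simp only [pc, if_neg (not_le.2 (mem_Ioi.1 hx))]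
    have hval : pc a f' g' t = g' t := by simp only [pc, if_neg (not_le.2 h)]
    rw [hval]
    exact (hg t).congr_of_eventuallyEq he

omit [NormedSpace ℝ E] in
theorem pc_continuous {a : ℝ} {f g : ℝ → E} (hf : Continuous f) (hg : Continuous g)
    (hv : f a = g a) : Continuous (pc a f g) := by
  refine Continuous.if_le hf hg continuous_id continuous_const ?_
  rintro x rfl; exact hv

end
section ST

/-- smoothstep -/
def st : ℝ → ℝ := pc 0 (fun _ => 0) (pc 1 (fun t => 3*t^2 - 2*t^3) (fun _ => 1))
def st' : ℝ → ℝ := pc 0 (fun _ => 0) (pc 1 (fun t => 6*t - 6*t^2) (fun _ => 0))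

theorem poly_hasDerivAt (t : ℝ) : HasDerivAt (fun t => 3*t^2 - 2*t^3) (6*t - 6*t^2) t := by
  have h := (((hasDerivAt_pow 2 t).const_mul 3).sub ((hasDerivAt_pow 3 t).const_mul 2))
  exact h.congr_deriv (by norm_num; ring)

theorem st_hasDerivAt (t : ℝ) : HasDerivAt st (st' t) t := by
  refine pc_hasDerivAt (fun t => hasDerivAt_const t 0)
      (fun t => pc_hasDerivAt poly_hasDerivAt (fun t => hasDerivAt_const t 1) (by norm_num)
        (by norm_num) t) (by simp [pc]) (by simp [pc]) t

theorem st'_nonneg (t : ℝ) : 0 ≤ st' t := by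
  unfold st' pc
  dsimp only
  split_ifs with h1 h2
  · exact le_rfl
  · nlinarith [not_le.1 h1]
  · exact le_rfl

theorem st'_cont : Continuous st' := by
  refine pc_continuous continuous_const (pc_continuous (by continuity) continuous_const ?_) ?_ <;>
    norm_num [pc]

theorem st_zero : st 0 = 0 := by simp [st, pc]
theorem st_one : st 1 = 1 := by norm_num [st, pc]
theorem st'_zero : st' 0 = 0 := by simp [st', pc]
theorem st'_one : st' 1 = 0 := by norm_num [st', pc]

theorem st'_integral : ∫ t in (0:ℝ)..1, st' t = 1 := by
  rw [integral_eq_sub_of_hasDerivAt (fun t _ => st_hasDerivAt t)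
      (st'_cont.intervalIntegrable _ _), st_one, st_zero, sub_zero]

end ST

section AF

variable {η : ℝ}

def Af (η : ℝ) : ℝ → ℝ := pc η (fun t => t * (1 - t/η)^2) (fun _ => 0)
def Af' (η : ℝ) : ℝ → ℝ := pc η (fun t => (1 - t/η)^2 - 2*(t/η)*(1 - t/η)) (fun _ => 0)

theorem Af_hasDerivAt (hη : 0 < η) (t : ℝ) : HasDerivAt (Af η) (Af' η t) t := by
  refine pc_hasDerivAt (fun t => ?_) (fun t => hasDerivAt_const t 0) (by field_simp; simp)
    (by field_simp; simp) t
  have h := (hasDerivAt_id t).mul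
    (((hasDerivAt_const t (1:ℝ)).sub ((hasDerivAt_id t).div_const η)).pow 2)
  exact h.congr_deriv (by simp; ring)

theorem Af'_cont (hη : 0 < η) : Continuous (Af' η) := by
  refine pc_continuous (by fun_prop) continuous_const ?_
  field_simp; simp

theorem Af_zero (hη : 0 < η) : Af η 0 = 0 := by simp [Af, pc, hη.le]
theorem Af_one (hη1 : η < 1) : Af η 1 = 0 := by simp [Af, pc, not_le.2 hη1]
theorem Af'_zero (hη : 0 < η) : Af' η 0 = 1 := by simp [Af', pc, hη.le]
theorem Af'_one (hη1 : η < 1) : Af' η 1 = 0 := by simp [Af', pc, not_le.2 hη1]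

theorem Af'_abs_le (hη : 0 < η) {t : ℝ} (ht : t ∈ Icc 0 η) : |Af' η t| ≤ 3 := by
  have h1 : Af' η t = (1 - t/η)^2 - 2*(t/η)*(1 - t/η) := by
    simp [Af', pc, ht.2]
  have hu0 : 0 ≤ t/η := div_nonneg ht.1 hη.le
  have hu1 : t/η ≤ 1 := (div_le_one hη).2 ht.2
  rw [h1, abs_le]
  constructor <;> nlinarith

theorem Af'_integral_le (hη : 0 < η) (hη1 : η ≤ 1) : ∫ t in (0:ℝ)..1, |Af' η t| ≤ 3*η := by
  have hcont : Continuous fun t => |Af' η t| := (Af'_cont hη).abs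
  have hsplit : ∫ t in (0:ℝ)..1, |Af' η t| =
      (∫ t in (0:ℝ)..η, |Af' η t|) + ∫ t in η..(1:ℝ), |Af' η t| :=
    (integral_add_adjacent_intervals (hcont.intervalIntegrable _ _)
      (hcont.intervalIntegrable _ _)).symm
  have h2 : ∫ t in η..(1:ℝ), |Af' η t| = 0 := by
    have heq : EqOn (fun t => |Af' η t|) (fun _ => (0:ℝ)) (uIcc η 1) := by
      intro x hx
      rw [uIcc_of_le hη1] at hx
      have hz : Af' η x = 0 := by
        unfold Af' pc
        dsimp only
        split_ifs with h
        · have : x = η := le_antisymm h hx.1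
          subst this
          field_simp; simp
        · rfl
      simp [hz]
    rw [integral_congr heq]
    simp
  have h1 : ∫ t in (0:ℝ)..η, |Af' η t| ≤ ∫ _ in (0:ℝ)..η, (3:ℝ) :=
    integral_mono_on hη.le (hcont.intervalIntegrable _ _)
      (intervalIntegrable_const) (fun x hx => Af'_abs_le hη hx)
  have h3 : ∫ _ in (0:ℝ)..η, (3:ℝ) = 3*η := by
    rw [intervalIntegral.integral_const]
    simp [mul_comm]
  rw [hsplit, h2, add_zero]
  linarith

theorem Af'_rev_integral_le (hη : 0 < η) (hη1 : η ≤ 1) :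
    ∫ t in (0:ℝ)..1, |Af' η (1 - t)| ≤ 3*η := by
  have h := integral_comp_sub_left (a := 0) (b := 1) (fun t => |Af' η t|) 1
  norm_num at h
  rw [h]
  exact Af'_integral_le hη hη1

end AF
section Geo

/-- abbreviation for parameter space -/
abbrev ES (D : ℕ) := EuclideanSpace ℝ (Fin D)

variable {D : ℕ} (G : ES D → Matrix (Fin D) (Fin D) ℝ)

/-- pullback integrand -/
def fG (γ γ' : ℝ → ES D) : ℝ → ℝ :=
  fun t => Real.sqrt (γ' t ⬝ᵥ (G (γ t)).mulVec (γ' t))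

/-- pullback length -/
def len (γ γ' : ℝ → ES D) : ℝ := ∫ t in (0:ℝ)..1, fG G γ γ' t

theorem sqrt_quad_smul (w v : ES D) (c : ℝ) :
    Real.sqrt ((c • v : ES D) ⬝ᵥ (G w).mulVec (c • v : ES D)) = |c| * Real.sqrt (v ⬝ᵥ (G w).mulVec v) := by
  have h : ((c • v : ES D) ⬝ᵥ (G w).mulVec (c • v : ES D)) = c^2 * (v ⬝ᵥ (G w).mulVec v) := by
    rw [WithLp.ofLp_smul]
    rw [Matrix.mulVec_smul, smul_dotProduct, dotProduct_smul,
      smul_eq_mul, smul_eq_mul]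
    ring
  rw [h, Real.sqrt_mul (sq_nonneg c), Real.sqrt_sq_eq_abs]

theorem fG_nonneg (γ γ' : ℝ → ES D) (t : ℝ) : 0 ≤ fG G γ γ' t := Real.sqrt_nonneg _

/-- cost of a path moving along a ray -/
theorem cost_of_ray {L : ℝ} (hL : 0 ≤ L)
    (hbound : ∀ (w v : ES D), Real.sqrt (v ⬝ᵥ (G w).mulVec v) ≤ L * ‖v‖)
    (w u : ES D) (ρ ρ' : ℝ → ℝ) (hρ' : Continuous ρ') {B : ℝ}
    (hB : ∫ t in (0:ℝ)..1, |ρ' t| ≤ B)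
    (hII : IntervalIntegrable (fG G (fun t => w + ρ t • u) (fun t => ρ' t • u)) volume 0 1) :
    len G (fun t => w + ρ t • u) (fun t => ρ' t • u) ≤ L * B * ‖u‖ := by
  have key : ∀ t : ℝ, fG G (fun t => w + ρ t • u) (fun t => ρ' t • u) t ≤ |ρ' t| * (L * ‖u‖) := by
    intro t
    rw [fG, sqrt_quad_smul]
    exact mul_le_mul_of_nonneg_left (hbound _ _) (abs_nonneg _)
  have hgint : IntervalIntegrable (fun t => |ρ' t| * (L * ‖u‖)) volume 0 1 :=
    (hρ'.abs.mul continuous_const).intervalIntegrable _ _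
  have h1 : len G (fun t => w + ρ t • u) (fun t => ρ' t • u) ≤
      ∫ t in (0:ℝ)..1, |ρ' t| * (L * ‖u‖) :=
    integral_mono_on (by norm_num) hII hgint (fun x _ => key x)
  have h2 : ∫ t in (0:ℝ)..1, |ρ' t| * (L * ‖u‖) = (∫ t in (0:ℝ)..1, |ρ' t|) * (L * ‖u‖) :=
    integral_mul_const _ _
  have h3 : (∫ t in (0:ℝ)..1, |ρ' t|) * (L * ‖u‖) ≤ B * (L * ‖u‖) :=
    mul_le_mul_of_nonneg_right hB (by positivity)
  calc len G (fun t => w + ρ t • u) (fun t => ρ' t • u) ≤ _ := h1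
    _ = _ := h2
    _ ≤ B * (L * ‖u‖) := h3
    _ = L * B * ‖u‖ := by ring

/-- path with controlled length certificate -/
def Plen (a b : ES D) (ε : ℝ) : Prop :=
  ∃ γ γ' : ℝ → ES D, (∀ t, HasDerivAt γ (γ' t) t) ∧ Continuous γ' ∧
    γ 0 = a ∧ γ 1 = b ∧ γ' 0 = 0 ∧ γ' 1 = 0 ∧
    (IntervalIntegrable (fG G γ γ') volume 0 1 → len G γ γ' < ε)

theorem Plen_mono {a b : ES D} {ε ε' : ℝ} (h : Plen G a b ε) (hle : ε ≤ ε') : Plen G a b ε' := by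
  obtain ⟨γ, γ', h1, h2, h3, h4, h5, h6, h7⟩ := h
  exact ⟨γ, γ', h1, h2, h3, h4, h5, h6, fun hI => lt_of_lt_of_le (h7 hI) hle⟩

theorem II_congr_eqOn {f g : ℝ → ℝ} {a b : ℝ} (hab : a ≤ b) (h : EqOn f g (uIcc a b))
    (hf : IntervalIntegrable f volume a b) : IntervalIntegrable g volume a b := by
  rw [intervalIntegrable_iff] at hf ⊢
  refine hf.congr_fun (fun x hx => h ?_) measurableSet_uIoc
  rw [uIoc_of_le hab] at hx
  rw [uIcc_of_le hab]
  exact Ioc_subset_Icc_self hx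

theorem glueRaw {γ₁ γ₁' γ₂ γ₂' : ℝ → ES D}
    (h₁ : ∀ t, HasDerivAt γ₁ (γ₁' t) t) (c₁ : Continuous γ₁')
    (h₂ : ∀ t, HasDerivAt γ₂ (γ₂' t) t) (c₂ : Continuous γ₂')
    (hv : γ₁ 1 = γ₂ 0) (hd : γ₁' 1 = γ₂' 0) :
    ∃ Γ Γ' : ℝ → ES D, (∀ t, HasDerivAt Γ (Γ' t) t) ∧ Continuous Γ' ∧
      Γ 0 = γ₁ 0 ∧ Γ 1 = γ₂ 1 ∧ Γ' 0 = (2:ℝ) • γ₁' 0 ∧ Γ' 1 = (2:ℝ) • γ₂' 1 ∧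
      (IntervalIntegrable (fG G Γ Γ') volume 0 1 →
        IntervalIntegrable (fG G γ₁ γ₁') volume 0 1 ∧
        IntervalIntegrable (fG G γ₂ γ₂') volume 0 1 ∧
        len G Γ Γ' = len G γ₁ γ₁' + len G γ₂ γ₂') := by
  set u₁ : ℝ → ES D := fun t => γ₁ (2*t) with hu₁
  set u₂ : ℝ → ES D := fun t => γ₂ (2*t - 1) with hu₂
  set u₁' : ℝ → ES D := fun t => (2:ℝ) • γ₁' (2*t) with hu₁'
  set u₂' : ℝ → ES D := fun t => (2:ℝ) • γ₂' (2*t - 1) with hu₂'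
  have hdu₁ : ∀ t, HasDerivAt u₁ (u₁' t) t := by
    intro t
    have ht : HasDerivAt (fun t : ℝ => 2*t) 2 t := by
      simpa using (hasDerivAt_id t).const_mul (2:ℝ)
    exact HasDerivAt.scomp t (h₁ (2*t)) ht
  have hdu₂ : ∀ t, HasDerivAt u₂ (u₂' t) t := by
    intro t
    have ht : HasDerivAt (fun t : ℝ => 2*t - 1) 2 t := by
      simpa using ((hasDerivAt_id t).const_mul (2:ℝ)).sub_const 1
    exact HasDerivAt.scomp t (h₂ (2*t - 1)) ht
  have hvj : u₁ (1/2 : ℝ) = u₂ (1/2 : ℝ) := by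
    simp only [hu₁, hu₂]; norm_num [hv]
  have hdj : u₁' (1/2 : ℝ) = u₂' (1/2 : ℝ) := by
    simp only [hu₁', hu₂']; norm_num [hd]
  have hcu₁' : Continuous u₁' := by
    rw [hu₁']
    exact Continuous.const_smul (g := fun t => γ₁' (2*t)) (c₁.comp (by continuity)) (2:ℝ)
  have hcu₂' : Continuous u₂' := by
    rw [hu₂']
    exact Continuous.const_smul (g := fun t => γ₂' (2*t - 1)) (c₂.comp (by continuity)) (2:ℝ)
  refine ⟨pc (1/2) u₁ u₂, pc (1/2) u₁' u₂', pc_hasDerivAt hdu₁ hdu₂ hvj hdj,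
    pc_continuous hcu₁' hcu₂' hdj, ?_, ?_, ?_, ?_, ?_⟩
  · simp only [pc, if_pos (by norm_num : (0:ℝ) ≤ 1/2), hu₁]; norm_num
  · simp only [pc, if_neg (by norm_num : ¬ (1:ℝ) ≤ 1/2), hu₂]; norm_num
  · simp only [pc, if_pos (by norm_num : (0:ℝ) ≤ 1/2), hu₁']; norm_num
  · simp only [pc, if_neg (by norm_num : ¬ (1:ℝ) ≤ 1/2), hu₂']; norm_num
  · intro hI
    have hab : (0:ℝ) ≤ 1/2 := by norm_num
    have hbc : (1/2:ℝ) ≤ 1 := by norm_num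
    have heq₁ : EqOn (fG G (pc (1/2) u₁ u₂) (pc (1/2) u₁' u₂'))
        (fun t => 2 * fG G γ₁ γ₁' (2*t)) (uIcc (0:ℝ) (1/2)) := by
      intro x hx
      rw [uIcc_of_le hab] at hx
      simp only [fG, pc, if_pos hx.2, hu₁, hu₂, hu₁', hu₂']
      rw [sqrt_quad_smul]
      norm_num [fG]
    have heq₂ : EqOn (fG G (pc (1/2) u₁ u₂) (pc (1/2) u₁' u₂'))
        (fun t => 2 * fG G γ₂ γ₂' (2*t - 1)) (uIcc (1/2:ℝ) 1) := by
      intro x hx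
      rw [uIcc_of_le hbc] at hx
      rcases eq_or_lt_of_le hx.1 with h | h
      · have hx2 : x = 1/2 := h.symm
        subst hx2
        simp only [fG, pc, if_pos le_rfl, hu₁, hu₂, hu₁', hu₂']
        rw [sqrt_quad_smul]
        norm_num [hv, hd, fG]
      · simp only [fG, pc, if_neg (not_le.2 h), hu₁, hu₂, hu₁', hu₂']
        rw [sqrt_quad_smul]
        norm_num [fG]
    have hI₁ : IntervalIntegrable (fG G (pc (1/2) u₁ u₂) (pc (1/2) u₁' u₂')) volume 0 (1/2) :=
      hI.mono_set (by
        rw [uIcc_of_le hab, uIcc_of_le (by norm_num : (0:ℝ) ≤ 1)]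
        exact Icc_subset_Icc le_rfl (by norm_num))
    have hI₂ : IntervalIntegrable (fG G (pc (1/2) u₁ u₂) (pc (1/2) u₁' u₂')) volume (1/2) 1 :=
      hI.mono_set (by
        rw [uIcc_of_le hbc, uIcc_of_le (by norm_num : (0:ℝ) ≤ 1)]
        exact Icc_subset_Icc (by norm_num) le_rfl)
    have hII₁ : IntervalIntegrable (fun t => 2 * fG G γ₁ γ₁' (2*t)) volume 0 (1/2) :=
      II_congr_eqOn hab heq₁ hI₁
    have hII₂ : IntervalIntegrable (fun t => 2 * fG G γ₂ γ₂' (2*t - 1)) volume (1/2) 1 :=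
      II_congr_eqOn hbc heq₂ hI₂
    -- transfer to the original parametrizations
    have hf₁ : IntervalIntegrable (fG G γ₁ γ₁') volume 0 1 := by
      have h1 : IntervalIntegrable (fun t => fG G γ₁ γ₁' (2*t)) volume 0 (1/2) := by
        have h2 := hII₁.const_mul (1/2)
        have h3 : (fun t => (1/2 : ℝ) * (2 * fG G γ₁ γ₁' (2*t))) = fun t => fG G γ₁ γ₁' (2*t) := by
          funext t; ring
        rwa [h3] at h2
      have h2 := h1.comp_mul_left (c := 1/2) enorm_ne_top enorm_ne_top
      have h3 : (fun x : ℝ => fG G γ₁ γ₁' (2 * (1/2 * x))) = fG G γ₁ γ₁' := by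
        funext x; congr 1; ring
      rw [h3] at h2
      norm_num at h2
      exact h2
    have hf₂ : IntervalIntegrable (fG G γ₂ γ₂') volume 0 1 := by
      have h1 : IntervalIntegrable (fun t => fG G γ₂ γ₂' (2*t - 1)) volume (1/2) 1 := by
        have h2 := hII₂.const_mul (1/2)
        have h3 : (fun t => (1/2 : ℝ) * (2 * fG G γ₂ γ₂' (2*t - 1))) =
            fun t => fG G γ₂ γ₂' (2*t - 1) := by
          funext t; ring
        rwa [h3] at h2
      have h2 := h1.comp_mul_left (c := 1/2) enorm_ne_top enorm_ne_top
      have h3 : (fun x : ℝ => fG G γ₂ γ₂' (2 * (1/2 * x) - 1)) = fun x => fG G γ₂ γ₂' (x - 1) := by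
        funext x; congr 1; ring
      rw [h3] at h2
      norm_num at h2
      have h4 := h2.comp_add_right 1
      have h5 : (fun x : ℝ => fG G γ₂ γ₂' (x + 1 - 1)) = fG G γ₂ γ₂' := by
        funext x; congr 1; ring
      rw [h5] at h4
      norm_num at h4
      exact h4
    refine ⟨hf₁, hf₂, ?_⟩
    have hsplit : len G (pc (1/2) u₁ u₂) (pc (1/2) u₁' u₂') =
        (∫ t in (0:ℝ)..(1/2), fG G (pc (1/2) u₁ u₂) (pc (1/2) u₁' u₂') t) +
        ∫ t in (1/2:ℝ)..1, fG G (pc (1/2) u₁ u₂) (pc (1/2) u₁' u₂') t :=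
      (integral_add_adjacent_intervals hI₁ hI₂).symm
    have hA : (∫ t in (0:ℝ)..(1/2), fG G (pc (1/2) u₁ u₂) (pc (1/2) u₁' u₂') t) =
        len G γ₁ γ₁' := by
      rw [integral_congr heq₁, intervalIntegral.integral_const_mul,
        intervalIntegral.integral_comp_mul_left _ two_ne_zero]
      norm_num [len]
      ring
    have hB : (∫ t in (1/2:ℝ)..1, fG G (pc (1/2) u₁ u₂) (pc (1/2) u₁' u₂') t) =
        len G γ₂ γ₂' := by
      rw [integral_congr heq₂, intervalIntegral.integral_const_mul,
        intervalIntegral.integral_comp_mul_sub _ two_ne_zero]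
      norm_num [len]
      ring
    rw [hsplit, hA, hB]

theorem Plen_glue {a b c : ES D} {ε₁ ε₂ : ℝ} (h1 : Plen G a b ε₁) (h2 : Plen G b c ε₂) :
    Plen G a c (ε₁ + ε₂) := by
  obtain ⟨γ₁, γ₁', hd₁, hc₁, ha₁, hb₁, hz₁, hz₁', hlen₁⟩ := h1
  obtain ⟨γ₂, γ₂', hd₂, hc₂, ha₂, hb₂, hz₂, hz₂', hlen₂⟩ := h2
  obtain ⟨Γ, Γ', hΓd, hΓc, hΓ0, hΓ1, hΓ'0, hΓ'1, hΓint⟩ :=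
    glueRaw G hd₁ hc₁ hd₂ hc₂ (hb₁.trans ha₂.symm) (by rw [hz₁', hz₂])
  refine ⟨Γ, Γ', hΓd, hΓc, hΓ0.trans ha₁, hΓ1.trans hb₂, ?_, ?_, ?_⟩
  · rw [hΓ'0, hz₁, smul_zero]
  · rw [hΓ'1, hz₂', smul_zero]
  · intro hI
    obtain ⟨hf₁, hf₂, hsum⟩ := hΓint hI
    rw [hsum]
    exact add_lt_add (hlen₁ hf₁) (hlen₂ hf₂)

theorem Plen_straight {L : ℝ} (hL : 0 ≤ L)
    (hbound : ∀ (w v : ES D), Real.sqrt (v ⬝ᵥ (G w).mulVec v) ≤ L * ‖v‖)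
    (p q : ES D) {s : ℝ} (hs : 0 < s) : Plen G p q (L * ‖p - q‖ + s) := by
  refine ⟨fun t => p + st t • (q - p), fun t => st' t • (q - p), ?_, ?_, ?_, ?_, ?_, ?_, ?_⟩
  · exact fun t => ((st_hasDerivAt t).smul_const (q - p)).const_add p
  · exact st'_cont.smul continuous_const
  · simp only [st_zero, zero_smul, add_zero]
  · simp only [st_one, one_smul, add_sub_cancel]
  · simp only [st'_zero, zero_smul]
  · simp only [st'_one, zero_smul]
  · intro hI
    have hB : ∫ t in (0:ℝ)..1, |st' t| ≤ 1 := by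
      have : EqOn (fun t => |st' t|) st' (uIcc (0:ℝ) 1) := fun x _ => abs_of_nonneg (st'_nonneg x)
      rw [integral_congr this, st'_integral]
    have h := cost_of_ray G hL hbound p (q - p) st st' st'_cont hB hI
    have hn : ‖q - p‖ = ‖p - q‖ := norm_sub_rev _ _
    calc len G _ _ ≤ L * 1 * ‖q - p‖ := h
      _ = L * ‖p - q‖ := by rw [hn]; ring
      _ < L * ‖p - q‖ + s := by linarith

theorem Plen_equiv {L : ℝ} (hL : 0 ≤ L)
    (hbound : ∀ (w v : ES D), Real.sqrt (v ⬝ᵥ (G w).mulVec v) ≤ L * ‖v‖)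
    {a b : ES D}
    (hsm : ∀ ε > 0, ∃ γ γ' : ℝ → ES D,
      (∀ t, HasDerivAt γ (γ' t) t) ∧ Continuous γ' ∧ γ 0 = a ∧ γ 1 = b ∧
      (∫ t in (0:ℝ)..1, Real.sqrt (γ' t ⬝ᵥ (G (γ t)).mulVec (γ' t))) < ε)
    {e : ℝ} (he : 0 < e) : Plen G a b e := by
  obtain ⟨γ, γ', hγd, hγc, hγ0, hγ1, hγlen⟩ := hsm (e/2) (by positivity)
  set v0 := γ' 0 with hv0
  set v1 := γ' 1 with hv1
  obtain ⟨N, hN0, hNdef⟩ : ∃ N : ℝ, 0 ≤ N ∧ N = L * (‖v0‖ + 2 * ‖v1‖) :=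
    ⟨_, by positivity, rfl⟩
  obtain ⟨η, hη0, hη1, hηsm⟩ : ∃ η : ℝ, 0 < η ∧ η < 1 ∧ 3 * η * N ≤ e / 4 := by
    have key : ∀ m : ℝ, 0 ≤ m → m ≤ e / (12 * (N + 1)) → 3 * m * N ≤ e / 4 := by
      intro m hm0 hm
      have h12 : m * (12 * (N + 1)) ≤ e := by
        rw [← le_div_iff₀ (by positivity : (0:ℝ) < 12 * (N + 1))]
        exact hm
      nlinarith [mul_nonneg hm0 hN0]
    refine ⟨min (1/2) (e / (12 * (N + 1))), lt_min (by norm_num) (by positivity),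
      lt_of_le_of_lt (min_le_left _ _) (by norm_num), ?_⟩
    exact key _ (le_min (by norm_num) (by positivity)) (min_le_right _ _)
  -- the two connectors
  set c1 : ℝ → ES D := fun t => a + (-(Af η (1 - t))) • v0 with hc1
  set c1' : ℝ → ES D := fun t => (Af' η (1 - t)) • v0 with hc1'
  set u2 : ES D := (2:ℝ) • v1 with hu2
  set c2 : ℝ → ES D := fun t => b + (Af η t) • u2 with hc2
  set c2' : ℝ → ES D := fun t => (Af' η t) • u2 with hc2'
  have hρ1 : ∀ t : ℝ, HasDerivAt (fun t => -(Af η (1 - t))) (Af' η (1 - t)) t := by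
    intro t
    have h1 : HasDerivAt (fun t : ℝ => 1 - t) (-1) t := by
      exact ((hasDerivAt_const t (1:ℝ)).sub (hasDerivAt_id t)).congr_deriv (by norm_num)
    have h2 := (Af_hasDerivAt hη0 (1 - t)).comp t h1
    have h3 := h2.neg
    exact h3.congr_deriv (by ring)
  have hc1d : ∀ t, HasDerivAt c1 (c1' t) t :=
    fun t => ((hρ1 t).smul_const v0).const_add a
  have hc1c : Continuous c1' := by
    rw [hc1']
    exact Continuous.smul ((Af'_cont hη0).comp (by continuity)) continuous_const
  have hc2d : ∀ t, HasDerivAt c2 (c2' t) t :=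
    fun t => ((Af_hasDerivAt hη0 t).smul_const u2).const_add b
  have hc2c : Continuous c2' := Continuous.smul (Af'_cont hη0) continuous_const
  -- glue c1 with γ
  obtain ⟨Γ₁, Γ₁', hΓ₁d, hΓ₁c, hΓ₁0, hΓ₁1, hΓ₁'0, hΓ₁'1, hΓ₁int⟩ :=
    glueRaw G hc1d hc1c hγd hγc
      (by rw [hc1, hγ0]; simp [Af_zero hη0])
      (by rw [hc1', hv0]; simp [Af'_zero hη0])
  -- glue Γ₁ with c2
  obtain ⟨Γ, Γ', hΓd, hΓc, hΓ0, hΓ1, hΓ'0, hΓ'1, hΓint⟩ :=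
    glueRaw G hΓ₁d hΓ₁c hc2d hc2c
      (by rw [hΓ₁1, hγ1, hc2]; simp [Af_zero hη0])
      (by rw [hΓ₁'1, hc2', hu2, hv1]; simp [Af'_zero hη0])
  refine ⟨Γ, Γ', hΓd, hΓc, ?_, ?_, ?_, ?_, ?_⟩
  · rw [hΓ0, hΓ₁0, hc1]; simp [Af_one hη1]
  · rw [hΓ1, hc2]; simp [Af_one hη1]
  · rw [hΓ'0, hΓ₁'0, hc1']; simp [Af'_one hη1]
  · rw [hΓ'1, hc2']; simp [Af'_one hη1]
  · intro hI
    obtain ⟨hIΓ₁, hIc2, hsum⟩ := hΓint hI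
    obtain ⟨hIc1, hIγ, hsum'⟩ := hΓ₁int hIΓ₁
    have hcont1 : Continuous (fun t : ℝ => Af' η (1 - t)) :=
      (Af'_cont hη0).comp (continuous_const.sub continuous_id)
    have hlc1 : len G c1 c1' ≤ L * (3*η) * ‖v0‖ := by
      rw [hc1, hc1']
      rw [hc1, hc1'] at hIc1
      exact cost_of_ray G hL hbound a v0 (fun t => -(Af η (1 - t))) (fun t => Af' η (1 - t))
        hcont1 (Af'_rev_integral_le hη0 hη1.le) hIc1
    have hlc2 : len G c2 c2' ≤ L * (3*η) * ‖u2‖ := by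
      rw [hc2, hc2']
      rw [hc2, hc2'] at hIc2
      exact cost_of_ray G hL hbound b u2 (Af η) (Af' η) (Af'_cont hη0)
        (Af'_integral_le hη0 hη1.le) hIc2
    have hγlen' : len G γ γ' < e/2 := hγlen
    have hnu2 : ‖u2‖ = 2 * ‖v1‖ := by
      rw [hu2, norm_smul]
      simp
    have hcon : L * (3*η) * ‖v0‖ + L * (3*η) * ‖u2‖ = 3 * η * N := by
      rw [hnu2, hNdef]; ring
    rw [hsum, hsum']
    linarith

end Geo
end

/-- If the pullback seminorm is uniformly bounded (`‖v‖_{G_w} ≤ L‖v‖`), and any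
two equivalent parameters are joined by paths of arbitrarily small pullback
length, then a quotient (chain) distance `< δ` between `w₀` and `w₁` implies a
geodesic pullback distance `< 3Lδ`. -/
theorem quotient_close_implies_geodesic_close {D : ℕ}
    (G : EuclideanSpace ℝ (Fin D) → Matrix (Fin D) (Fin D) ℝ)
    (hG : ∀ w, (G w).PosSemidef) (L : ℝ) (hL : 0 < L)
    (hbound : ∀ (w v : EuclideanSpace ℝ (Fin D)),
      Real.sqrt (v ⬝ᵥ (G w).mulVec v) ≤ L * ‖v‖)
    (R : EuclideanSpace ℝ (Fin D) → EuclideanSpace ℝ (Fin D) → Prop)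
    (hR : Equivalence R)
    (hsmall : ∀ w w', R w w' → ∀ ε > 0,
      ∃ γ γ' : ℝ → EuclideanSpace ℝ (Fin D),
        (∀ t, HasDerivAt γ (γ' t) t) ∧ Continuous γ' ∧ γ 0 = w ∧ γ 1 = w' ∧
        (∫ t in (0:ℝ)..1, Real.sqrt (γ' t ⬝ᵥ (G (γ t)).mulVec (γ' t))) < ε)
    (w₀ w₁ : EuclideanSpace ℝ (Fin D)) (δ : ℝ) (hδ : 0 < δ)
    (hchain : ∃ (n : ℕ) (p q : Fin (n + 1) → EuclideanSpace ℝ (Fin D)),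
      R w₀ (p 0) ∧ (∀ i : Fin n, R (q i.castSucc) (p i.succ)) ∧
      R (q (Fin.last n)) w₁ ∧ ∑ i, ‖p i - q i‖ < δ) :
    sInf { l : ℝ | ∃ γ γ' : ℝ → EuclideanSpace ℝ (Fin D),
        (∀ t, HasDerivAt γ (γ' t) t) ∧ Continuous γ' ∧
        γ 0 = w₀ ∧ γ 1 = w₁ ∧
        l = ∫ t in (0:ℝ)..1, Real.sqrt (γ' t ⬝ᵥ (G (γ t)).mulVec (γ' t)) } <
      3 * L * δ := by
  classical
  obtain ⟨n, p, q, h0, hmid, h1, hsum⟩ := hchain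
  have hLpos : (0:ℝ) ≤ L := hL.le
  obtain ⟨e, he0, hedef⟩ : ∃ e : ℝ, 0 < e ∧ e = L * δ / (n + 2) :=
    ⟨_, by positivity, rfl⟩
  obtain ⟨s, hs0, hsdef⟩ : ∃ s : ℝ, 0 < s ∧ s = L * δ / (n + 1) :=
    ⟨_, by positivity, rfl⟩
  have hequiv : ∀ a b : EuclideanSpace ℝ (Fin D), R a b → Plen G a b e :=
    fun a b hab => Plen_equiv G hLpos hbound (hsmall a b hab) he0
  have hstraight : ∀ x y : EuclideanSpace ℝ (Fin D), Plen G x y (L * ‖x - y‖ + s) :=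
    fun x y => Plen_straight G hLpos hbound x y hs0
  set W : ℕ → ℝ := fun i => if h : i < n + 1 then ‖p ⟨i, h⟩ - q ⟨i, h⟩‖ else 0 with hWdef
  have hWval : ∀ (i : ℕ) (h : i < n + 1), W i = ‖p ⟨i, h⟩ - q ⟨i, h⟩‖ := by
    intro i h
    simp only [hWdef, dif_pos h]
  have key : ∀ k : ℕ, ∀ hk : k < n + 1, Plen G w₀ (q ⟨k, hk⟩)
      (((k:ℝ) + 1) * (e + s) + L * ∑ i ∈ Finset.range (k + 1), W i) := by
    intro k
    induction k with
    | zero =>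
      intro hk
      have hfin0 : (⟨0, hk⟩ : Fin (n + 1)) = 0 := by ext; simp
      have hstep := Plen_glue G (hequiv w₀ (p 0) h0) (hstraight (p 0) (q 0))
      rw [← hfin0] at hstep
      refine Plen_mono G hstep (le_of_eq ?_)
      rw [Finset.sum_range_one, hWval 0 hk, hfin0]
      push_cast
      ring
    | succ k ih =>
      intro hk
      have hk' : k < n + 1 := by omega
      have hkk : k < n := by omega
      have hmid' : R (q ⟨k, hk'⟩) (p ⟨k + 1, hk⟩) := by
        have h := hmid ⟨k, hkk⟩
        have e1 : (Fin.castSucc ⟨k, hkk⟩ : Fin (n + 1)) = ⟨k, hk'⟩ := by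
          ext; simp
        have e2 : (Fin.succ ⟨k, hkk⟩ : Fin (n + 1)) = ⟨k + 1, hk⟩ := by
          ext; simp
        rwa [e1, e2] at h
      have hstep := Plen_glue G (Plen_glue G (ih hk') (hequiv _ _ hmid'))
        (hstraight (p ⟨k + 1, hk⟩) (q ⟨k + 1, hk⟩))
      refine Plen_mono G hstep (le_of_eq ?_)
      rw [show ∑ i ∈ Finset.range (k + 1 + 1), W i
            = ∑ i ∈ Finset.range (k + 1), W i + W (k + 1) from Finset.sum_range_succ W (k + 1),
        hWval (k + 1) hk]
      push_cast
      ring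
  have hlastR : R (q ⟨n, by omega⟩) w₁ := by
    have hfl : (Fin.last n : Fin (n + 1)) = ⟨n, by omega⟩ := by ext; simp
    rwa [hfl] at h1
  have hfinal := Plen_glue G (key n (by omega)) (hequiv _ _ hlastR)
  -- bound the total budget
  have hSestimate : ∑ i ∈ Finset.range (n + 1), W i < δ := by
    have hs1 : ∑ i : Fin (n + 1), W ↑i = ∑ i ∈ Finset.range (n + 1), W i :=
      Fin.sum_univ_eq_sum_range W (n + 1)
    have hs2 : ∑ i : Fin (n + 1), W ↑i = ∑ i : Fin (n + 1), ‖p i - q i‖ := by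
      refine Finset.sum_congr rfl (fun i _ => ?_)
      rw [hWval ↑i i.isLt]
    rw [← hs1, hs2]
    exact hsum
  have hbudget : ((n:ℝ) + 1) * (e + s) + L * (∑ i ∈ Finset.range (n + 1), W i) + e
      < 3 * L * δ := by
    have hLS : L * (∑ i ∈ Finset.range (n + 1), W i) < L * δ :=
      mul_lt_mul_of_pos_left hSestimate hL
    have hne2 : ((n:ℝ) + 2) ≠ 0 := by positivity
    have hne1 : ((n:ℝ) + 1) ≠ 0 := by positivity
    have h2 : ((n:ℝ) + 1) * e + e = L * δ := by
      rw [hedef]; field_simp; ring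
    have h3 : ((n:ℝ) + 1) * s = L * δ := by
      rw [hsdef]; field_simp
    nlinarith
  obtain ⟨Γ, Γ', hΓd, hΓc, hΓ0, hΓ1, _, _, himp⟩ := hfinal
  refine csInf_lt_of_lt
    (b := 3 * L * δ)
    (a := ∫ t in (0:ℝ)..1, Real.sqrt (Γ' t ⬝ᵥ (G (Γ t)).mulVec (Γ' t))) ?_ ?_ ?_
  · refine ⟨0, fun x hx => ?_⟩
    obtain ⟨γ, γ', _, _, _, _, hxeq⟩ := hx
    rw [hxeq]
    exact intervalIntegral.integral_nonneg (by norm_num) (fun u _ => Real.sqrt_nonneg _)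
  · exact ⟨Γ, Γ', hΓd, hΓc, hΓ0, hΓ1, rfl⟩
  · by_cases hI : IntervalIntegrable (fG G Γ Γ') volume 0 1
    · exact lt_trans (himp hI) hbudget
    · have hz : (∫ t in (0:ℝ)..1, Real.sqrt (Γ' t ⬝ᵥ (G (Γ t)).mulVec (Γ' t))) = 0 :=
        intervalIntegral.integral_undef hI
      rw [hz]
      positivity
end
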